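/- Let X_L and X_R be disjoint subsets of V. Suppose a, a' ∈ F₂^{X_L} have equal boundary signatures, i.e. aᵀ·A[X_L, V\X_L] = a'ᵀ·A[X_L, V\X_L], and b, b' ∈ F₂^{X_R} have equal boundary signatures, i.e. bᵀ·A[X_R, V\X_R] = b'ᵀ·A[X_R, V\X_R]. Then aᵀ·A[X_L, X_R]·b = a'ᵀ·A[X_L, X_R]·b' in F₂. In other words, the cross-term parity χ = aᵀ·A[X_L, X_R]·b depends only on the two boundary signatures and not on the chosen assignments realizing them. -/
import Mathlib


open Classical

/-- The `F₂`-adjacency matrix of a simple graph. -/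
noncomputable def adjMat {V : Type*} [Fintype V] (G : SimpleGraph V) : Matrix V V (ZMod 2) :=
  fun u v => if G.Adj u v then 1 else 0

/-- The boundary signature `σ_X(z) = zᵀ·A[X, V\X]` of an assignment `z ∈ F₂^X`. -/
noncomputable def bsig {V : Type*} [Fintype V] (G : SimpleGraph V) (X : Finset V)
    (z : {v // v ∈ X} → ZMod 2) : {w : V // w ∉ X} → ZMod 2 :=
  fun w => ∑ v : {v // v ∈ X}, z v * adjMat G v.1 w.1

/-- the cross-term parity `aᵀ·A[X_L, X_R]·b` depends only on the boundary
signatures of `a` and `b`, not on the chosen assignments realizing them. -/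
theorem cross_term_well_defined {V : Type*} [Fintype V] [DecidableEq V]
    (G : SimpleGraph V) (XL XR : Finset V) (hdisj : Disjoint XL XR)
    (a a' : {v // v ∈ XL} → ZMod 2) (b b' : {v // v ∈ XR} → ZMod 2)
    (ha : bsig G XL a = bsig G XL a')
    (hb : bsig G XR b = bsig G XR b') :
    ∑ u : {v // v ∈ XL}, ∑ v : {v // v ∈ XR}, a u * adjMat G u.1 v.1 * b v
      = ∑ u : {v // v ∈ XL}, ∑ v : {v // v ∈ XR}, a' u * adjMat G u.1 v.1 * b' v := by
  have hA : ∀ u v : V, adjMat G u v = adjMat G v u := by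
    intro u v; simp [adjMat, G.adj_comm]
  have step1 : ∀ u : {v // v ∈ XL},
      ∑ v : {v // v ∈ XR}, a u * adjMat G u.1 v.1 * b v
        = ∑ v : {v // v ∈ XR}, a u * adjMat G u.1 v.1 * b' v := by
    intro u
    have hu : u.1 ∉ XR := fun h => Finset.disjoint_left.mp hdisj u.2 h
    have h := congrFun hb ⟨u.1, hu⟩
    simp only [bsig] at h
    calc ∑ v : {v // v ∈ XR}, a u * adjMat G u.1 v.1 * b v
        = a u * ∑ v : {v // v ∈ XR}, b v * adjMat G v.1 u.1 := by
          rw [Finset.mul_sum]; exact Finset.sum_congr rfl fun v _ => by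
            rw [hA u.1 v.1]; ring
      _ = a u * ∑ v : {v // v ∈ XR}, b' v * adjMat G v.1 u.1 := by rw [h]
      _ = ∑ v : {v // v ∈ XR}, a u * adjMat G u.1 v.1 * b' v := by
          rw [Finset.mul_sum]; exact Finset.sum_congr rfl fun v _ => by
            rw [hA u.1 v.1]; ring
  have step2 : ∀ v : {v // v ∈ XR},
      ∑ u : {v // v ∈ XL}, a u * adjMat G u.1 v.1 * b' v
        = ∑ u : {v // v ∈ XL}, a' u * adjMat G u.1 v.1 * b' v := by
    intro v
    have hv : v.1 ∉ XL := fun h => Finset.disjoint_right.mp hdisj v.2 h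
    have h := congrFun ha ⟨v.1, hv⟩
    simp only [bsig] at h
    calc ∑ u : {v // v ∈ XL}, a u * adjMat G u.1 v.1 * b' v
        = (∑ u : {v // v ∈ XL}, a u * adjMat G u.1 v.1) * b' v := by
          rw [Finset.sum_mul]
      _ = (∑ u : {v // v ∈ XL}, a' u * adjMat G u.1 v.1) * b' v := by rw [h]
      _ = ∑ u : {v // v ∈ XL}, a' u * adjMat G u.1 v.1 * b' v := by
          rw [Finset.sum_mul]
  calc ∑ u : {v // v ∈ XL}, ∑ v : {v // v ∈ XR}, a u * adjMat G u.1 v.1 * b v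
      = ∑ u : {v // v ∈ XL}, ∑ v : {v // v ∈ XR}, a u * adjMat G u.1 v.1 * b' v :=
        Finset.sum_congr rfl fun u _ => step1 u
    _ = ∑ v : {v // v ∈ XR}, ∑ u : {v // v ∈ XL}, a u * adjMat G u.1 v.1 * b' v :=
        Finset.sum_comm
    _ = ∑ v : {v // v ∈ XR}, ∑ u : {v // v ∈ XL}, a' u * adjMat G u.1 v.1 * b' v :=
        Finset.sum_congr rfl fun v _ => step2 v
    _ = ∑ u : {v // v ∈ XL}, ∑ v : {v // v ∈ XR}, a' u * adjMat G u.1 v.1 * b' v :=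
        Finset.sum_comm
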